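/- If A is a coherent quantale, then Max(A) = Max(R(A)) and Spec(A) = Spec(R(A)), where R(A) is the set of radical elements of A (elements a with ρ(a) = a). -/
import Mathlib


open CompleteLattice

/-- A commutative unital quantale: a complete lattice with a commutative monoid
multiplication distributing over arbitrary joins, whose unit is the top element. -/
class CommQuantale (A : Type*) extends CompleteLattice A, CommMonoid A where
  one_eq_top : (1 : A) = ⊤
  mul_sSup : ∀ (a : A) (S : Set A), a * sSup S = ⨆ b ∈ S, a * b

namespace CommQuantale

variable {A : Type*} [CommQuantale A]

/-- A coherent quantale: algebraic, with `1 = ⊤` compact and compacts closed under `*`. -/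
def Coherent (A : Type*) [CommQuantale A] : Prop :=
  (∀ a : A, a = sSup {c : A | IsCompactElement c ∧ c ≤ a}) ∧
  IsCompactElement (⊤ : A) ∧
  ∀ c d : A, IsCompactElement c → IsCompactElement d → IsCompactElement (c * d)

/-- m-prime element. -/
def MPrime (p : A) : Prop :=
  p < ⊤ ∧ ∀ a b : A, a * b ≤ p → a ≤ p ∨ b ≤ p

/-- The radical of an element. -/
def rad (a : A) : A := sInf {p : A | MPrime p ∧ a ≤ p}

/-- Maximal element of `A \ {1}`. -/
def MaxElem (m : A) : Prop := m < ⊤ ∧ ∀ x : A, m ≤ x → x < ⊤ → x = m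

/-- Radical element. -/
def RadElem (a : A) : Prop := rad a = a

/-- Residuation `a → b`. -/
def res (a b : A) : A := sSup {x : A | a * x ≤ b}

/-- Complemented element (member of the Boolean center `B(A)`). -/
def Complemented (e : A) : Prop := ∃ f : A, e ⊔ f = ⊤ ∧ e ⊓ f = ⊥

end CommQuantale

open CommQuantale

/-- Maximal element of the frame `R(A)` of radical elements. -/
def MaxR {A : Type*} [CommQuantale A] (m : A) : Prop :=
  RadElem m ∧ m < ⊤ ∧ ∀ x : A, RadElem x → m ≤ x → x < ⊤ → x = m

/-- m-prime element of the frame `R(A)` (whose multiplication is the meet). -/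
def MPrimeR {A : Type*} [CommQuantale A] (p : A) : Prop :=
  RadElem p ∧ p < ⊤ ∧
    ∀ a b : A, RadElem a → RadElem b → a ⊓ b ≤ p → a ≤ p ∨ b ≤ p

namespace CommQuantale

variable {A : Type*} [CommQuantale A]

lemma mul_sup' (a b c : A) : a * (b ⊔ c) = a * b ⊔ a * c := by
  have h := CommQuantale.mul_sSup a {b, c}
  rw [sSup_pair] at h
  rw [h, iSup_pair]

lemma mul_mono_right {b c : A} (a : A) (h : b ≤ c) : a * b ≤ a * c := by
  have : a * (b ⊔ c) = a * b ⊔ a * c := mul_sup' a b c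
  rw [sup_eq_right.mpr h] at this
  rw [this]; exact le_sup_left

lemma mul_le_left (a b : A) : a * b ≤ a := by
  have : a * b ≤ a * ⊤ := mul_mono_right a le_top
  simpa [← CommQuantale.one_eq_top] using this

lemma mul_le_right (a b : A) : a * b ≤ b := by
  rw [mul_comm]; exact mul_le_left b a

lemma le_rad (a : A) : a ≤ rad a := le_sInf fun p hp => hp.2

lemma rad_mono {a b : A} (h : a ≤ b) : rad a ≤ rad b :=
  sInf_le_sInf fun p hp => ⟨hp.1, h.trans hp.2⟩

lemma MPrime.radElem {p : A} (hp : MPrime p) : RadElem p :=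
  le_antisymm (sInf_le ⟨hp, le_rfl⟩) (le_rad p)

lemma radElem_rad (a : A) : RadElem (rad a) := by
  unfold RadElem rad
  congr 1
  ext p
  constructor
  · rintro ⟨hp, h⟩; exact ⟨hp, (le_rad a).trans h⟩
  · rintro ⟨hp, h⟩; exact ⟨hp, sInf_le ⟨hp, h⟩⟩

lemma rad_inf_le_rad_mul (a b : A) : rad a ⊓ rad b ≤ rad (a * b) := by
  apply _root_.le_sInf
  rintro q ⟨hq, hab⟩
  rcases hq.2 a b hab with h | h
  · exact inf_le_left.trans (sInf_le ⟨hq, h⟩)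
  · exact inf_le_right.trans (sInf_le ⟨hq, h⟩)

lemma MaxElem.mprime {m : A} (hm : MaxElem m) : MPrime m := by
  refine ⟨hm.1, fun a b hab => ?_⟩
  by_contra hc
  push_neg at hc
  obtain ⟨ha, hb⟩ := hc
  have hma : m ⊔ a = ⊤ := by
    by_contra h
    have := hm.2 (m ⊔ a) le_sup_left (lt_top_iff_ne_top.mpr h)
    exact ha (le_sup_right.trans this.le)
  have hmb : m ⊔ b = ⊤ := by
    by_contra h
    have := hm.2 (m ⊔ b) le_sup_left (lt_top_iff_ne_top.mpr h)
    exact hb (le_sup_right.trans this.le)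
  have : (⊤ : A) ≤ m := by
    calc (⊤ : A) = (1 : A) * 1 := by rw [one_mul, CommQuantale.one_eq_top]
    _ = (m ⊔ a) * (m ⊔ b) := by rw [CommQuantale.one_eq_top, hma, hmb]
    _ = (m ⊔ a) * m ⊔ (m ⊔ a) * b := mul_sup' _ _ _
    _ ≤ m ⊔ ((m ⊔ a) * b) := sup_le_sup_right (mul_le_right _ _) _
    _ = m ⊔ (m * b ⊔ a * b) := by rw [mul_comm (m ⊔ a) b, mul_sup', mul_comm b m, mul_comm b a]
    _ ≤ m := sup_le le_rfl (sup_le (mul_le_left _ _) hab)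
  exact absurd (top_le_iff.mp this) (by simpa using hm.1.ne)

lemma exists_maxElem_above (hA : Coherent A) {x : A} (hx : x < ⊤) :
    ∃ m : A, MaxElem m ∧ x ≤ m := by
  obtain ⟨-, htop, -⟩ := hA
  rw [isCompactElement_iff_le_of_directed_sSup_le] at htop
  have hz : ∀ c ⊆ {y : A | y < ⊤}, IsChain (· ≤ ·) c → ∀ y ∈ c,
      ∃ ub ∈ {y : A | y < ⊤}, ∀ z ∈ c, z ≤ ub := by
    intro c hc hchain y hy
    refine ⟨sSup c, ?_, fun z hz => le_sSup hz⟩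
    rw [Set.mem_setOf_eq, lt_top_iff_ne_top]
    intro htopc
    obtain ⟨z, hzc, hz⟩ := htop c ⟨y, hy⟩ hchain.directedOn htopc.ge
    exact absurd (top_le_iff.mp hz) (lt_top_iff_ne_top.mp (hc hzc))
  obtain ⟨m, hxm, hmem, hmax⟩ := zorn_le_nonempty₀ {y : A | y < ⊤} hz x hx
  exact ⟨m, ⟨hmem, fun z hmz hzt => le_antisymm (hmax hzt hmz) hmz⟩, hxm⟩

lemma rad_lt_top (hA : Coherent A) {x : A} (hx : x < ⊤) : rad x < ⊤ := by
  obtain ⟨m, hm, hxm⟩ := exists_maxElem_above hA hx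
  exact lt_of_le_of_lt (sInf_le ⟨hm.mprime, hxm⟩) hm.1

end CommQuantale

theorem stmt8 {A : Type*} [CommQuantale A] (hA : Coherent A) :
    {m : A | MaxElem m} = {m : A | MaxR m} ∧
    {p : A | MPrime p} = {p : A | MPrimeR p} := by
  constructor
  · ext m
    simp only [Set.mem_setOf_eq]
    constructor
    · intro hm
      exact ⟨hm.mprime.radElem, hm.1, fun x _ hmx hx => hm.2 x hmx hx⟩
    · rintro ⟨hrad, hlt, hmax⟩
      refine ⟨hlt, fun x hmx hx => ?_⟩
      have h1 : m ≤ rad x := hrad ▸ rad_mono hmx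
      have h2 : rad x = m := hmax (rad x) (radElem_rad x) h1 (rad_lt_top hA hx)
      exact le_antisymm (h2 ▸ le_rad x) hmx
  · ext p
    simp only [Set.mem_setOf_eq]
    constructor
    · intro hp
      refine ⟨hp.radElem, hp.1, fun a b _ _ hab => ?_⟩
      exact hp.2 a b (le_trans (le_inf (mul_le_left a b) (mul_le_right a b)) hab)
    · rintro ⟨hrad, hlt, hprime⟩
      refine ⟨hlt, fun a b hab => ?_⟩
      have h : rad a ⊓ rad b ≤ p := by
        calc rad a ⊓ rad b ≤ rad (a * b) := rad_inf_le_rad_mul a b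
        _ ≤ rad p := rad_mono hab
        _ = p := hrad
      rcases hprime (rad a) (rad b) (radElem_rad a) (radElem_rad b) h with h' | h'
      · exact Or.inl ((le_rad a).trans h')
      · exact Or.inr ((le_rad b).trans h')
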